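/- Each static butterfly is counted exactly once under the vertex-priority scheme: let u, w be the two upper-layer vertices and v, x the two lower-layer vertices of a butterfly, and let their priorities p_u, p_w, p_v, p_x be four pairwise distinct real numbers. Among the four ordered same-layer pairs (s, o) ∈ {(u, w), (w, u), (v, x), (x, v)}, there is exactly one pair (s, o) such that both wedges from start-vertex s through the two opposite-layer middle-vertices m_1, m_2 to end-vertex o satisfy the priority condition p_s > p_{m_1}, p_s > p_{m_2}, and p_s > p_o. -/

import Mathlib

/-- Each static butterfly is counted exactly once under the vertex-priority scheme.
Let `pu, pw` be the priorities of the upper-layer vertices `u, w` and `pv, px` those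
of the lower-layer vertices `v, x`, all pairwise distinct.  Index the four ordered
same-layer (start, end) pairs, together with the corresponding opposite-layer
middle-vertices, as quadruples `(p_s, p_o, p_{m1}, p_{m2})`:
`(u,w)`, `(w,u)` with middles `v, x`, and `(v,x)`, `(x,v)` with middles `u, w`.
Then exactly one of these four pairs satisfies the priority condition
`p_s > p_{m1}`, `p_s > p_{m2}` and `p_s > p_o` for both of its wedges. -/
theorem butterfly_counted_once_by_priority (pu pw pv px : ℝ)
    (hdist : pu ≠ pw ∧ pu ≠ pv ∧ pu ≠ px ∧ pw ≠ pv ∧ pw ≠ px ∧ pv ≠ px) :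
    ∃! i : Fin 4,
      (fun q : ℝ × ℝ × ℝ × ℝ => q.1 > q.2.2.1 ∧ q.1 > q.2.2.2 ∧ q.1 > q.2.1)
        (![(pu, pw, pv, px), (pw, pu, pv, px), (pv, px, pu, pw), (px, pv, pu, pw)] i) := by
  obtain ⟨h1, h2, h3, h4, h5, h6⟩ := hdist
  have hex : ∃ i : Fin 4,
      (fun q : ℝ × ℝ × ℝ × ℝ => q.1 > q.2.2.1 ∧ q.1 > q.2.2.2 ∧ q.1 > q.2.1)
        (![(pu, pw, pv, px), (pw, pu, pv, px), (pv, px, pu, pw), (px, pv, pu, pw)] i) := by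
    rcases lt_or_gt_of_ne h1 with a | a <;>
      rcases lt_or_gt_of_ne h2 with b | b <;>
      rcases lt_or_gt_of_ne h3 with c | c <;>
      rcases lt_or_gt_of_ne h4 with d | d <;>
      rcases lt_or_gt_of_ne h5 with e | e <;>
      rcases lt_or_gt_of_ne h6 with f | f <;>
      first
      | (refine ⟨0, ?_⟩; simp only [Matrix.cons_val_zero]; exact ⟨by linarith, by linarith, by linarith⟩)
      | (refine ⟨1, ?_⟩; simp only [Matrix.cons_val_one, Matrix.cons_val_zero, Matrix.head_cons]; exact ⟨by linarith, by linarith, by linarith⟩)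
      | (refine ⟨2, ?_⟩; simp only [Matrix.cons_val_two, Matrix.tail_cons, Matrix.head_cons]; exact ⟨by linarith, by linarith, by linarith⟩)
      | (refine ⟨3, ?_⟩; simp only [Matrix.cons_val_three, Matrix.tail_cons, Matrix.head_cons]; exact ⟨by linarith, by linarith, by linarith⟩)
  obtain ⟨i, hi⟩ := hex
  refine ⟨i, hi, ?_⟩
  rintro j hj
  fin_cases i <;> fin_cases j <;> simp_all <;> linarith
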